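/- Fix a ∈ (0,1), ν > 0, and θ ≤ 0. Define f₀(θ) = θ and f_{n+1}(θ) = θ + a(e^{f_n(θ)} - 1). Then (1/t) Σ_{s=0}^{t-1} ν(e^{f_s(θ)} - 1) converges as t → ∞ to ν(x*(θ) - 1), where x*(θ) is the minimal solution of x = e^{θ + a(x-1)}. -/

import Mathlib

theorem limiting_log_mgf (a ν θ : ℝ) (ha : a ∈ Set.Ioo (0 : ℝ) 1) (hν : 0 < ν) (hθ : θ ≤ 0)
    (f : ℕ → ℝ) (hf0 : f 0 = θ)
    (hfr : ∀ n : ℕ, f (n + 1) = θ + a * (Real.exp (f n) - 1)) :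
    ∃ xs : ℝ, (xs = Real.exp (θ + a * (xs - 1)) ∧
        ∀ z : ℝ, z = Real.exp (θ + a * (z - 1)) → xs ≤ z) ∧
      Filter.Tendsto
        (fun t : ℕ => (1 / (t : ℝ)) * ∑ s ∈ Finset.range t, ν * (Real.exp (f s) - 1))
        Filter.atTop (nhds (ν * (xs - 1))) := by
  obtain ⟨ha0, ha1⟩ := ha
  -- f n ≤ 0 for all n
  have hneg : ∀ n, f n ≤ 0 := by
    intro n
    induction n with
    | zero => rw [hf0]; exact hθ
    | succ k ih =>
      rw [hfr k]
      have : Real.exp (f k) ≤ 1 := Real.exp_le_one_iff.2 ih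
      nlinarith
  -- f is antitone
  have hstep : ∀ n, f (n + 1) ≤ f n := by
    intro n
    induction n with
    | zero =>
      rw [hfr 0, hf0]
      have : Real.exp θ ≤ 1 := Real.exp_le_one_iff.2 hθ
      nlinarith
    | succ k ih =>
      have hexp : Real.exp (f (k + 1)) ≤ Real.exp (f k) := Real.exp_le_exp.2 ih
      calc f (k + 1 + 1) = θ + a * (Real.exp (f (k + 1)) - 1) := hfr (k + 1)
        _ ≤ θ + a * (Real.exp (f k) - 1) := by nlinarith
        _ = f (k + 1) := (hfr k).symm
  have hanti : Antitone f := antitone_nat_of_succ_le hstep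
  -- bounded below by θ - a
  have hbdd : ∀ n, θ - a ≤ f n := by
    intro n
    cases n with
    | zero => rw [hf0]; linarith
    | succ k =>
      rw [hfr k]
      have : 0 < Real.exp (f k) := Real.exp_pos _
      nlinarith
  have hBdd : BddBelow (Set.range f) := ⟨θ - a, by rintro x ⟨n, rfl⟩; exact hbdd n⟩
  set L : ℝ := ⨅ n, f n with hLdef
  have hL : Filter.Tendsto f Filter.atTop (nhds L) := tendsto_atTop_ciInf hanti hBdd
  have hLθ : L ≤ θ := by
    have := ciInf_le hBdd 0
    rwa [hf0] at this
  have hL0 : L ≤ 0 := hLθ.trans hθ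
  -- fixed point equation for L
  have hfix : L = θ + a * (Real.exp L - 1) := by
    have h1 : Filter.Tendsto (fun n => f (n + 1)) Filter.atTop (nhds L) :=
      hL.comp (Filter.tendsto_add_atTop_nat 1)
    have h2 : Filter.Tendsto (fun n => θ + a * (Real.exp (f n) - 1)) Filter.atTop
        (nhds (θ + a * (Real.exp L - 1))) := by
      have he : Filter.Tendsto (fun n => Real.exp (f n)) Filter.atTop (nhds (Real.exp L)) :=
        by exact (Real.continuous_exp.tendsto L).comp hL
      exact tendsto_const_nhds.add (((he.sub tendsto_const_nhds)).const_mul a)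
    have h3 : Filter.Tendsto (fun n => θ + a * (Real.exp (f n) - 1)) Filter.atTop (nhds L) := by
      have : (fun n => θ + a * (Real.exp (f n) - 1)) = fun n => f (n + 1) := by
        funext n; rw [hfr n]
      rwa [this]
    exact tendsto_nhds_unique h3 h2
  refine ⟨Real.exp L, ⟨?_, ?_⟩, ?_⟩
  · -- fixed point equation for xs = exp L
    conv_lhs => rw [hfix]
  · -- minimality
    intro z hz
    have hz0 : 0 < z := hz ▸ Real.exp_pos _
    set μ := Real.log z with hμdef
    have hzμ : z = Real.exp μ := (Real.exp_log hz0).symm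
    have hμfix : μ = θ + a * (Real.exp μ - 1) := by
      rw [← hzμ, hμdef]
      conv_lhs => rw [hz]
      rw [Real.log_exp]
    rw [hzμ]
    apply Real.exp_le_exp.2
    -- show L ≤ μ
    by_contra hcon
    push_neg at hcon  -- μ < L
    have hexpL : Real.exp L ≤ 1 := Real.exp_le_one_iff.2 hL0
    have hkey : Real.exp L * (1 + (μ - L)) ≤ Real.exp μ := by
      have := Real.add_one_le_exp (μ - L)
      have h4 : Real.exp L * Real.exp (μ - L) = Real.exp μ := by
        rw [← Real.exp_add]; ring_nf
      nlinarith [Real.exp_pos L]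
    -- L - μ = a * (exp L - exp μ) ≤ a * exp L * (L - μ) < L - μ
    have hdiff : L - μ = a * (Real.exp L - Real.exp μ) := by
      linear_combination hfix - hμfix
    nlinarith [Real.exp_pos L]
  · -- Cesàro convergence
    have hu : Filter.Tendsto (fun s => ν * (Real.exp (f s) - 1)) Filter.atTop
        (nhds (ν * (Real.exp L - 1))) :=
      by
        have he : Filter.Tendsto (fun n => Real.exp (f n)) Filter.atTop (nhds (Real.exp L)) :=
          by exact (Real.continuous_exp.tendsto L).comp hL
        exact (he.sub tendsto_const_nhds).const_mul ν
    have := hu.cesaro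
    simpa [one_div] using this
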